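/- Let ω(t,x) be a power series in t with coefficients sections over an abelian variety S, η(x) a section, and suppose ω'(t,x) = Σ_{i=0}^{i₀−1} c_i t^i ω(t,x) + η(x) t^{i₀} mod (t^{i₀+1}) with 0 ≤ i₀ ≤ ν−1, and P̃(t^ν ω, ω') ≡ 0 mod (t^{2ν}), where P̃ satisfies the multiplication rule P̃(t^i r, t^j s) = t^{i+j} P̃(r,s) + (1/2)(i−j)t^{i+j−1}(r s_a − r_a s) and P̃(t^ν ω, t^i ω) = 0. Then (ν − i₀)·t^{ν+i₀−1}·ω(0,x)·ω(0,x−a)·(η(x)/ω(0,x) − η(x−a)/ω(0,x−a)) ≡ 0 mod (t^{ν+i₀}); hence if ν > i₀ and ω(0,·) ≢ 0, the meromorphic function η(x)/ω(0,x) on S is invariant under translation by a. -/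

import Mathlib

open PowerSeries

/-- the key computation in the induction on `i₀` in Lemma 3.
Sections over the abelian variety `S` are modelled by the ring `F`, with the
translation `r ↦ r_a` given by `T0`; power series in `t` with section
coefficients are `PowerSeries F`, with `t = X`. -/
theorem stmt15 {F : Type*} [CommRing F] [IsDomain F] [Algebra ℚ F]
    (T0 : F ≃+* F)
    (Pt : PowerSeries F → PowerSeries F → PowerSeries F)
    (ω ω' : PowerSeries F) (η : F) (c : ℕ → ℚ) (ν i₀ : ℕ)
    (hi₀ : i₀ < ν)
    -- P̃ is biadditive and ℚ-bilinear in the second variable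
    (haddr : ∀ r s s', Pt r (s + s') = Pt r s + Pt r s')
    (hsmul : ∀ (q : ℚ) (r s : PowerSeries F), Pt r (q • s) = q • Pt r s)
    -- the multiplication rule for powers of t
    (hrule : ∀ (i j : ℕ) (r s : PowerSeries F),
      Pt ((X : PowerSeries F) ^ i * r) ((X : PowerSeries F) ^ j * s)
        = (X : PowerSeries F) ^ (i + j) * Pt r s
          + (((i : ℚ) - (j : ℚ)) / 2) •
            ((X : PowerSeries F) ^ (i + j - 1)
              * (r * PowerSeries.map (T0 : F →+* F) s
                 - PowerSeries.map (T0 : F →+* F) r * s)))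
    -- P̃(t^ν ω, t^i ω) = 0
    (hzero : ∀ i : ℕ, Pt ((X : PowerSeries F) ^ ν * ω) ((X : PowerSeries F) ^ i * ω) = 0)
    -- ω' = Σ_{i<i₀} c_i t^i ω + η t^{i₀}  mod (t^{i₀+1})
    (hω' : ω' - (∑ i ∈ Finset.range i₀, c i • ((X : PowerSeries F) ^ i * ω)
        + (PowerSeries.C : F →+* PowerSeries F) η * (X : PowerSeries F) ^ i₀)
      ∈ Ideal.span ({(X : PowerSeries F) ^ (i₀ + 1)} : Set (PowerSeries F)))
    -- P̃(t^ν ω, ω') ≡ 0 mod (t^{2ν})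
    (hPt : Pt ((X : PowerSeries F) ^ ν * ω) ω'
      ∈ Ideal.span ({(X : PowerSeries F) ^ (2 * ν)} : Set (PowerSeries F))) :
    -- the displayed congruence, with ω₀ = ω(0,·) the constant coefficient of ω
    (((ν : ℚ) - (i₀ : ℚ)) •
        ((X : PowerSeries F) ^ (ν + i₀ - 1)
          * (PowerSeries.C : F →+* PowerSeries F)
              (η * T0 ((PowerSeries.constantCoeff : PowerSeries F →+* F) ω)
                - T0 η * (PowerSeries.constantCoeff : PowerSeries F →+* F) ω))
      ∈ Ideal.span ({(X : PowerSeries F) ^ (ν + i₀)} : Set (PowerSeries F))) ∧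
    -- hence η/ω(0,·) is invariant under translation by a
    ((PowerSeries.constantCoeff : PowerSeries F →+* F) ω ≠ 0 →
      η * T0 ((PowerSeries.constantCoeff : PowerSeries F →+* F) ω)
        = T0 η * (PowerSeries.constantCoeff : PowerSeries F →+* F) ω) := by
  set J : Ideal (PowerSeries F) :=
    Ideal.span ({(X : PowerSeries F) ^ (ν + i₀)} : Set (PowerSeries F)) with hJ
  obtain ⟨q, hq⟩ := (Ideal.mem_span_singleton).mp hω'
  have hω'eq : ω' = (∑ i ∈ Finset.range i₀, c i • ((X : PowerSeries F) ^ i * ω)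
      + (X : PowerSeries F) ^ i₀ * PowerSeries.C (R := F) η) + (X : PowerSeries F) ^ (i₀ + 1) * q := by
    rw [mul_comm ((X : PowerSeries F) ^ i₀) (PowerSeries.C (R := F) η)]
    linear_combination hq
  set D : PowerSeries F :=
    ω * PowerSeries.map (T0 : F →+* F) (PowerSeries.C (R := F) η)
      - PowerSeries.map (T0 : F →+* F) ω * PowerSeries.C (R := F) η with hD
  set D2 : PowerSeries F :=
    ω * PowerSeries.map (T0 : F →+* F) q - PowerSeries.map (T0 : F →+* F) ω * q with hD2
  have hPsum : Pt ((X : PowerSeries F) ^ ν * ω)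
      (∑ i ∈ Finset.range i₀, c i • ((X : PowerSeries F) ^ i * ω)) = 0 := by
    let f : PowerSeries F →+ PowerSeries F :=
      AddMonoidHom.mk' (Pt ((X : PowerSeries F) ^ ν * ω)) (haddr _)
    have h := map_sum f (fun i => c i • ((X : PowerSeries F) ^ i * ω)) (Finset.range i₀)
    have h' : Pt ((X : PowerSeries F) ^ ν * ω)
          (∑ i ∈ Finset.range i₀, c i • ((X : PowerSeries F) ^ i * ω))
        = ∑ i ∈ Finset.range i₀,
            Pt ((X : PowerSeries F) ^ ν * ω) (c i • ((X : PowerSeries F) ^ i * ω)) := h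
    rw [h']
    refine Finset.sum_eq_zero fun i _ => ?_
    rw [hsmul, hzero, smul_zero]
  have key : Pt ((X : PowerSeries F) ^ ν * ω) ω'
      = (X : PowerSeries F) ^ (ν + i₀) * Pt ω (PowerSeries.C (R := F) η)
        + (((ν : ℚ) - (i₀ : ℚ)) / 2) • ((X : PowerSeries F) ^ (ν + i₀ - 1) * D)
        + ((X : PowerSeries F) ^ (ν + (i₀ + 1)) * Pt ω q
          + (((ν : ℚ) - ((i₀ + 1 : ℕ) : ℚ)) / 2) •
              ((X : PowerSeries F) ^ (ν + (i₀ + 1) - 1) * D2)) := by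
    rw [hω'eq, haddr, haddr, hPsum, zero_add, hrule ν i₀ ω (PowerSeries.C (R := F) η),
      hrule ν (i₀ + 1) ω q]
  have hPt' : Pt ((X : PowerSeries F) ^ ν * ω) ω' ∈ J :=
    Ideal.span_singleton_le_span_singleton.mpr (pow_dvd_pow _ (by omega)) hPt
  have h1 : (X : PowerSeries F) ^ (ν + i₀) * Pt ω (PowerSeries.C (R := F) η) ∈ J :=
    Ideal.mem_span_singleton.mpr (dvd_mul_right _ _)
  have h2 : (X : PowerSeries F) ^ (ν + (i₀ + 1)) * Pt ω q ∈ J :=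
    Ideal.mem_span_singleton.mpr (dvd_mul_of_dvd_left (pow_dvd_pow _ (by omega)) _)
  have h3 : (((ν : ℚ) - ((i₀ + 1 : ℕ) : ℚ)) / 2) •
      ((X : PowerSeries F) ^ (ν + (i₀ + 1) - 1) * D2) ∈ J := by
    rw [Algebra.smul_def]
    exact Ideal.mul_mem_left _ _
      (Ideal.mem_span_singleton.mpr (dvd_mul_of_dvd_left (pow_dvd_pow _ (by omega)) _))
  have hM : (((ν : ℚ) - (i₀ : ℚ)) / 2) • ((X : PowerSeries F) ^ (ν + i₀ - 1) * D) ∈ J := by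
    have heq : (((ν : ℚ) - (i₀ : ℚ)) / 2) • ((X : PowerSeries F) ^ (ν + i₀ - 1) * D)
        = Pt ((X : PowerSeries F) ^ ν * ω) ω'
          - (X : PowerSeries F) ^ (ν + i₀) * Pt ω (PowerSeries.C (R := F) η)
          - ((X : PowerSeries F) ^ (ν + (i₀ + 1)) * Pt ω q
            + (((ν : ℚ) - ((i₀ + 1 : ℕ) : ℚ)) / 2) •
                ((X : PowerSeries F) ^ (ν + (i₀ + 1) - 1) * D2)) := by
      rw [key]; ring
    rw [heq]
    exact sub_mem (sub_mem hPt' h1) (add_mem h2 h3)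
  obtain ⟨g, hg⟩ := Ideal.mem_span_singleton.mp hM
  have hco := congrArg (coeff (R := F) (ν + i₀ - 1)) hg
  rw [Algebra.smul_def, PowerSeries.algebraMap_apply] at hco
  simp only [map_mul, coeff_C_mul] at hco
  rw [coeff_X_pow_mul' D (ν + i₀ - 1) (ν + i₀ - 1),
    coeff_X_pow_mul' g (ν + i₀) (ν + i₀ - 1), if_pos le_rfl, if_neg (by omega),
    Nat.sub_self] at hco
  have hD0 : coeff (R := F) 0 D = constantCoeff (R := F) ω * T0 η - T0 (constantCoeff (R := F) ω) * η := by
    simp [hD, PowerSeries.map_C, ← coeff_zero_eq_constantCoeff, PowerSeries.coeff_map]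
  rw [hD0] at hco
  have hscne : algebraMap ℚ F (((ν : ℚ) - (i₀ : ℚ)) / 2) ≠ 0 := by
    intro h
    have := (algebraMap ℚ F).injective (h.trans (map_zero _).symm)
    have hν : (i₀ : ℚ) < (ν : ℚ) := by exact_mod_cast hi₀
    rw [div_eq_zero_iff] at this
    rcases this with h' | h'
    · linarith
    · norm_num at h'
  have hd0 : constantCoeff (R := F) ω * T0 η - T0 (constantCoeff (R := F) ω) * η = 0 := by
    rcases mul_eq_zero.mp hco with h | h
    · exact absurd h hscne
    · exact h
  have hd : η * T0 (constantCoeff (R := F) ω) - T0 η * constantCoeff (R := F) ω = 0 := by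
    linear_combination -hd0
  constructor
  · rw [hd, map_zero, mul_zero, smul_zero]
    exact zero_mem _
  · intro _
    linear_combination hd
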